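/- Let G=(V,E,W) be a finite graph, m_ij(t) ≥ 0 continuous symmetric rates (m_ij = m_ji for edges) with m_ii(t) = −Σ_{j∈N(i)} m_ij(t). Let (ρ(t),S(t)) be a C¹ solution with ρ_i(t) > 0 of the SBP Hamiltonian system: Ṡ_i = −m_ii − (1/2) Σ_{j∈N(i)} e^{S_j−S_i} m_ij √(ρ_j/ρ_i) − (1/2) Σ_{j∈N(i)} e^{S_i−S_j} m_ji √(ρ_j/ρ_i), and ρ̇_i = Σ_{j∈N(i)} e^{S_i−S_j} m_ji √(ρ_i ρ_j) − Σ_{j∈N(i)} e^{S_j−S_i} m_ij √(ρ_i ρ_j). Define f_i(t) = √(ρ_i(t)) e^{−S_i(t)} and g_i(t) = √(ρ_i(t)) e^{S_i(t)}. Then (f,g) solves the discrete Schrödinger system: ḟ_i = Σ_{j∈N(i)} (f_j − f_i) m_ij and ġ_i = −Σ_{j∈N(i)} (g_j − g_i) m_ij. -/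

import Mathlib

/-- Under the Madelung transform `f_i = √ρ_i e^{−S_i}`, `g_i = √ρ_i e^{S_i}`,
any C¹ positive solution of the SBP Hamiltonian system on a finite graph with continuous,
nonnegative, symmetric rates `m_ij(t)` (and `m_ii(t) = −Σ_{j∈N(i)} m_ij(t)`) is mapped
to a solution of the discrete Schrödinger system
`ḟ_i = Σ_{j∈N(i)} (f_j − f_i) m_ij`, `ġ_i = −Σ_{j∈N(i)} (g_j − g_i) m_ij`. -/
theorem sbp_to_schrodinger_system {N : ℕ}
    (G : SimpleGraph (Fin N)) [DecidableRel G.Adj]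
    (m : Fin N → Fin N → ℝ → ℝ)
    (hm_cont : ∀ i j, Continuous (m i j))
    (hm_nonneg : ∀ i j, G.Adj i j → ∀ t, 0 ≤ m i j t)
    (hm_symm : ∀ i j, G.Adj i j → ∀ t, m i j t = m j i t)
    (ρ S : ℝ → Fin N → ℝ)
    (hρ_pos : ∀ t i, 0 < ρ t i)
    (hS : ∀ t i, HasDerivAt (fun τ => S τ i)
        (- (- ∑ j ∈ G.neighborFinset i, m i j t)
          - (1/2) * ∑ j ∈ G.neighborFinset i,
              Real.exp (S t j - S t i) * m i j t * Real.sqrt (ρ t j / ρ t i)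
          - (1/2) * ∑ j ∈ G.neighborFinset i,
              Real.exp (S t i - S t j) * m j i t * Real.sqrt (ρ t j / ρ t i)) t)
    (hρ : ∀ t i, HasDerivAt (fun τ => ρ τ i)
        ((∑ j ∈ G.neighborFinset i,
            Real.exp (S t i - S t j) * m j i t * Real.sqrt (ρ t i * ρ t j))
         - ∑ j ∈ G.neighborFinset i,
            Real.exp (S t j - S t i) * m i j t * Real.sqrt (ρ t i * ρ t j)) t) :
    (∀ t i, HasDerivAt (fun τ => Real.sqrt (ρ τ i) * Real.exp (-(S τ i)))
        (∑ j ∈ G.neighborFinset i,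
          (Real.sqrt (ρ t j) * Real.exp (-(S t j))
            - Real.sqrt (ρ t i) * Real.exp (-(S t i))) * m i j t) t) ∧
    (∀ t i, HasDerivAt (fun τ => Real.sqrt (ρ τ i) * Real.exp (S τ i))
        (- ∑ j ∈ G.neighborFinset i,
          (Real.sqrt (ρ t j) * Real.exp (S t j)
            - Real.sqrt (ρ t i) * Real.exp (S t i)) * m i j t) t) := by
  have key : ∀ t i,
      (∑ j ∈ G.neighborFinset i,
          Real.exp (S t i - S t j) * m j i t * Real.sqrt (ρ t i * ρ t j))
        = (∑ j ∈ G.neighborFinset i,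
            Real.sqrt (ρ t j) * Real.exp (-(S t j)) * m i j t)
          * (Real.sqrt (ρ t i) * Real.exp (S t i)) := by
    intro t i
    rw [Finset.sum_mul]
    refine Finset.sum_congr rfl fun j hj => ?_
    have hadj : G.Adj i j := (G.mem_neighborFinset i j).mp hj
    rw [← hm_symm i j hadj t, Real.sqrt_mul (hρ_pos t i).le,
      show S t i - S t j = -(S t j) + S t i by ring, Real.exp_add]
    ring
  have key2 : ∀ t i,
      (∑ j ∈ G.neighborFinset i,
          Real.exp (S t j - S t i) * m i j t * Real.sqrt (ρ t i * ρ t j))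
        = (∑ j ∈ G.neighborFinset i,
            Real.sqrt (ρ t j) * Real.exp (S t j) * m i j t)
          * (Real.sqrt (ρ t i) * Real.exp (-(S t i))) := by
    intro t i
    rw [Finset.sum_mul]
    refine Finset.sum_congr rfl fun j hj => ?_
    rw [Real.sqrt_mul (hρ_pos t i).le,
      show S t j - S t i = S t j + -(S t i) by ring, Real.exp_add]
    ring
  have key3 : ∀ t i,
      (∑ j ∈ G.neighborFinset i,
          Real.exp (S t j - S t i) * m i j t * Real.sqrt (ρ t j / ρ t i))
        = (∑ j ∈ G.neighborFinset i,
            Real.sqrt (ρ t j) * Real.exp (S t j) * m i j t)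
          * (Real.exp (-(S t i)) / Real.sqrt (ρ t i)) := by
    intro t i
    rw [Finset.sum_mul]
    refine Finset.sum_congr rfl fun j hj => ?_
    rw [Real.sqrt_div (hρ_pos t j).le,
      show S t j - S t i = S t j + -(S t i) by ring, Real.exp_add]
    ring
  have key4 : ∀ t i,
      (∑ j ∈ G.neighborFinset i,
          Real.exp (S t i - S t j) * m j i t * Real.sqrt (ρ t j / ρ t i))
        = (∑ j ∈ G.neighborFinset i,
            Real.sqrt (ρ t j) * Real.exp (-(S t j)) * m i j t)
          * (Real.exp (S t i) / Real.sqrt (ρ t i)) := by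
    intro t i
    rw [Finset.sum_mul]
    refine Finset.sum_congr rfl fun j hj => ?_
    have hadj : G.Adj i j := (G.mem_neighborFinset i j).mp hj
    rw [← hm_symm i j hadj t, Real.sqrt_div (hρ_pos t j).le,
      show S t i - S t j = -(S t j) + S t i by ring, Real.exp_add]
    ring
  constructor
  · intro t i
    have hpi : (0:ℝ) < Real.sqrt (ρ t i) := Real.sqrt_pos.mpr (hρ_pos t i)
    have hsq := (hρ t i).sqrt (hρ_pos t i).ne'
    have hexp := ((hS t i).neg).exp
    have hD := hsq.mul hexp
    convert hD using 1
    · rfl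
    · rfl
    · rfl
    simp only [Pi.neg_apply]
    rw [key, key2, key3, key4]
    simp only [sub_mul]
    rw [Finset.sum_sub_distrib, ← Finset.mul_sum, Real.exp_neg]
    field_simp
    ring
  · intro t i
    have hpi : (0:ℝ) < Real.sqrt (ρ t i) := Real.sqrt_pos.mpr (hρ_pos t i)
    have hsq := (hρ t i).sqrt (hρ_pos t i).ne'
    have hexp := (hS t i).exp
    have hD := hsq.mul hexp
    convert hD using 1
    · rfl
    · rfl
    · rfl
    rw [key, key2, key3, key4]
    simp only [sub_mul]
    rw [Finset.sum_sub_distrib, ← Finset.mul_sum, Real.exp_neg]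
    field_simp
    ring
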